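/- Let A₁, A₂, C₁, C₂ be symmetric n×n real matrices, B₁, B₂ be n×n real matrices, and let S₁, S₂ : [0,T] → Sym(n,ℝ) be differentiable solutions of the matrix Riccati equations Sᵢ'(t) = Aᵢ + Bᵢ Sᵢ(t) + Sᵢ(t) Bᵢᵀ + Sᵢ(t) Cᵢ Sᵢ(t), i = 1, 2. If S₁(0) ≤ S₂(0) and the 2n×2n block matrices satisfy [[A₁, B₁],[B₁ᵀ, C₁]] ≤ [[A₂, B₂],[B₂ᵀ, C₂]], then S₁(t) ≤ S₂(t) for all t ∈ [0,T]. -/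

import Mathlib

noncomputable section
open Real Set Matrix Filter

lemma aux_symmdot {n : ℕ} (S : Matrix (Fin n) (Fin n) ℝ) (hS : S.IsSymm)
    (v z : Fin n → ℝ) : v ⬝ᵥ (S *ᵥ z) = (S *ᵥ v) ⬝ᵥ z := by
  rw [Matrix.dotProduct_mulVec, ← Matrix.mulVec_transpose, hS.eq]

lemma aux_dot_self_pos {n : ℕ} {v : Fin n → ℝ} (hv : v ≠ 0) : 0 < v ⬝ᵥ v := by
  have h1 : 0 ≤ v ⬝ᵥ v := Finset.sum_nonneg fun i _ => mul_self_nonneg _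
  rcases h1.lt_or_eq with h | h
  · exact h
  · exact absurd (dotProduct_self_eq_zero.mp h.symm) hv

lemma aux_entry_le {n : ℕ} {v : Fin n → ℝ} (hv : v ⬝ᵥ v = 1) (i : Fin n) : |v i| ≤ 1 := by
  have : v i * v i ≤ 1 := by
    rw [← hv]
    exact Finset.single_le_sum (f := fun j => v j * v j)
      (fun j _ => mul_self_nonneg _) (Finset.mem_univ i)
  nlinarith [abs_nonneg (v i), sq_abs (v i)]

lemma aux_quad_bound {n : ℕ} {v : Fin n → ℝ} (hv : v ⬝ᵥ v = 1)
    {X : Matrix (Fin n) (Fin n) ℝ} {c : ℝ} (hX : ∀ i j, |X i j| ≤ c) :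
    |v ⬝ᵥ (X *ᵥ v)| ≤ (n : ℝ)^2 * c := by
  have hc : 0 ≤ c := by
    rcases n.eq_zero_or_pos with h | h
    · subst h
      simp [dotProduct] at hv
    · exact le_trans (abs_nonneg _) (hX ⟨0, h⟩ ⟨0, h⟩)
  have h1 : v ⬝ᵥ (X *ᵥ v) = ∑ i, ∑ j, v i * (X i j * v j) := by
    simp [dotProduct, Matrix.mulVec, Finset.mul_sum]
  rw [h1]
  calc |∑ i, ∑ j, v i * (X i j * v j)| ≤ ∑ i, ∑ j, |v i * (X i j * v j)| := by
        refine (Finset.abs_sum_le_sum_abs _ _).trans ?_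
        exact Finset.sum_le_sum fun i _ => Finset.abs_sum_le_sum_abs _ _
    _ ≤ ∑ i : Fin n, ∑ j : Fin n, c := by
        refine Finset.sum_le_sum fun i _ => Finset.sum_le_sum fun j _ => ?_
        rw [abs_mul, abs_mul]
        calc |v i| * (|X i j| * |v j|) ≤ 1 * (c * 1) := by
              refine mul_le_mul (aux_entry_le hv i) ?_ (by positivity) zero_le_one
              exact mul_le_mul (hX i j) (aux_entry_le hv j) (abs_nonneg _) hc
          _ = c := by ring
    _ = (n : ℝ)^2 * c := by simp [Finset.sum_const]; ring

lemma aux_sphere_compact (n : ℕ) : IsCompact {v : Fin n → ℝ | v ⬝ᵥ v = 1} := by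
  have hclosed : IsClosed {v : Fin n → ℝ | v ⬝ᵥ v = 1} := by
    have : Continuous fun v : Fin n → ℝ => v ⬝ᵥ v := by
      simp only [dotProduct]
      exact continuous_finset_sum _ fun i _ => (continuous_apply i).mul (continuous_apply i)
    exact isClosed_eq this continuous_const
  refine (isCompact_closedBall (0 : Fin n → ℝ) 1).of_isClosed_subset hclosed ?_
  intro v hv
  simp only [Metric.mem_closedBall, dist_zero_right]
  rw [pi_norm_le_iff_of_nonneg zero_le_one]
  intro i
  rw [Real.norm_eq_abs]
  exact aux_entry_le hv i


/-- **Comparison theorem for matrix Riccati equations** (Theorem 3.2, after Royden):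
if `Sᵢ' = Aᵢ + BᵢSᵢ + SᵢBᵢᵀ + SᵢCᵢSᵢ` for `i = 1, 2`, `S₁(0) ≤ S₂(0)`, and
`[[A₁, B₁], [B₁ᵀ, C₁]] ≤ [[A₂, B₂], [B₂ᵀ, C₂]]`, then `S₁(t) ≤ S₂(t)` for all `t ∈ [0, T]`. -/
theorem riccati_comparison (n : ℕ) (T : ℝ) (hT : 0 < T)
    (A₁ A₂ C₁ C₂ B₁ B₂ : Matrix (Fin n) (Fin n) ℝ)
    (hA₁ : A₁.IsSymm) (hA₂ : A₂.IsSymm) (hC₁ : C₁.IsSymm) (hC₂ : C₂.IsSymm)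
    (S₁ S₂ : ℝ → Matrix (Fin n) (Fin n) ℝ)
    (hS₁symm : ∀ t ∈ Icc 0 T, (S₁ t).IsSymm)
    (hS₂symm : ∀ t ∈ Icc 0 T, (S₂ t).IsSymm)
    (hS₁ : ∀ t ∈ Icc 0 T, ∀ i j, HasDerivWithinAt (fun τ => S₁ τ i j)
      ((A₁ + B₁ * S₁ t + S₁ t * B₁ᵀ + S₁ t * C₁ * S₁ t) i j) (Icc 0 T) t)
    (hS₂ : ∀ t ∈ Icc 0 T, ∀ i j, HasDerivWithinAt (fun τ => S₂ τ i j)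
      ((A₂ + B₂ * S₂ t + S₂ t * B₂ᵀ + S₂ t * C₂ * S₂ t) i j) (Icc 0 T) t)
    (h0 : (S₂ 0 - S₁ 0).PosSemidef)
    (hblock : (Matrix.fromBlocks A₂ B₂ B₂ᵀ C₂ - Matrix.fromBlocks A₁ B₁ B₁ᵀ C₁).PosSemidef) :
    ∀ t ∈ Icc 0 T, (S₂ t - S₁ t).PosSemidef := by
  -- abbreviations
  set M : ℝ → Matrix (Fin n) (Fin n) ℝ := fun t => B₂ + S₂ t * C₂ with hM
  set N : ℝ → Matrix (Fin n) (Fin n) ℝ := fun t => B₂ᵀ + C₂ * S₁ t with hN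
  set R : ℝ → Matrix (Fin n) (Fin n) ℝ := fun t =>
    (A₂ - A₁) + (B₂ - B₁) * S₁ t + S₁ t * (B₂ᵀ - B₁ᵀ) + S₁ t * ((C₂ - C₁) * S₁ t) with hR
  -- key algebraic identity
  have hkey : ∀ t : ℝ, (A₂ + B₂ * S₂ t + S₂ t * B₂ᵀ + S₂ t * C₂ * S₂ t)
      - (A₁ + B₁ * S₁ t + S₁ t * B₁ᵀ + S₁ t * C₁ * S₁ t)
      = M t * (S₂ t - S₁ t) + (S₂ t - S₁ t) * N t + R t := by
    intro t
    simp only [hM, hN, hR]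
    noncomm_ring
  -- positivity of the remainder term R
  have hRpos : ∀ t ∈ Icc 0 T, ∀ v : Fin n → ℝ, 0 ≤ v ⬝ᵥ (R t *ᵥ v) := by
    intro t ht v
    have hfb : Matrix.fromBlocks A₂ B₂ B₂ᵀ C₂ - Matrix.fromBlocks A₁ B₁ B₁ᵀ C₁
        = Matrix.fromBlocks (A₂ - A₁) (B₂ - B₁) (B₂ᵀ - B₁ᵀ) (C₂ - C₁) := by
      ext i j
      rcases i with i | i <;> rcases j with j | j <;>
        simp [Matrix.fromBlocks, Matrix.sub_apply]
    have h2 := hblock.dotProduct_mulVec_nonneg (Sum.elim v (S₁ t *ᵥ v))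
    rw [star_trivial, hfb, Matrix.fromBlocks_mulVec, sumElim_dotProduct_sumElim] at h2
    have hs := hS₁symm t ht
    have e1 : v ⬝ᵥ (R t *ᵥ v)
        = v ⬝ᵥ ((A₂ - A₁) *ᵥ v) + v ⬝ᵥ ((B₂ - B₁) *ᵥ (S₁ t *ᵥ v))
          + (S₁ t *ᵥ v) ⬝ᵥ ((B₂ᵀ - B₁ᵀ) *ᵥ v) + (S₁ t *ᵥ v) ⬝ᵥ ((C₂ - C₁) *ᵥ (S₁ t *ᵥ v)) := by
      simp only [hR, Matrix.add_mulVec, dotProduct_add, ← Matrix.mulVec_mulVec]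
      rw [aux_symmdot (S₁ t) hs v ((B₂ᵀ - B₁ᵀ) *ᵥ v),
        aux_symmdot (S₁ t) hs v ((C₂ - C₁) *ᵥ (S₁ t *ᵥ v))]
    rw [e1]
    simp only [Sum.elim_comp_inl, Sum.elim_comp_inr] at h2
    rw [dotProduct_add, dotProduct_add] at h2
    linarith
  -- continuity of entries
  have hc₁ : ∀ i j, ContinuousOn (fun t => S₁ t i j) (Icc 0 T) :=
    fun i j t ht => (hS₁ t ht i j).continuousWithinAt
  have hc₂ : ∀ i j, ContinuousOn (fun t => S₂ t i j) (Icc 0 T) :=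
    fun i j t ht => (hS₂ t ht i j).continuousWithinAt
  have hcU : ∀ i j, ContinuousOn (fun t => (S₂ t - S₁ t) i j) (Icc 0 T) := by
    intro i j
    simp only [Matrix.sub_apply]
    exact (hc₂ i j).sub (hc₁ i j)
  have hcM : ∀ i j, ContinuousOn (fun t => M t i j) (Icc 0 T) := by
    intro i j
    simp only [hM, Matrix.add_apply, Matrix.mul_apply]
    exact continuousOn_const.add
      (continuousOn_finset_sum _ fun k _ => (hc₂ i k).mul continuousOn_const)
  have hcN : ∀ i j, ContinuousOn (fun t => N t i j) (Icc 0 T) := by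
    intro i j
    simp only [hN, Matrix.add_apply, Matrix.mul_apply]
    exact continuousOn_const.add
      (continuousOn_finset_sum _ fun k _ => continuousOn_const.mul (hc₁ k j))
  -- uniform bound on entries of M and N
  obtain ⟨c, hc⟩ : ∃ c : ℝ, ∀ t ∈ Icc 0 T, ∀ i j, |M t i j| ≤ c ∧ |N t i j| ≤ c := by
    obtain ⟨c, hc⟩ := isCompact_Icc.exists_bound_of_continuousOn
      (f := fun t => ∑ i : Fin n, ∑ j : Fin n, (|M t i j| + |N t i j|))
      (continuousOn_finset_sum _ fun i _ => continuousOn_finset_sum _ fun j _ =>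
        ((hcM i j).abs.add ((hcN i j).abs)))
    refine ⟨c, fun t ht i j => ?_⟩
    have hft := hc t ht
    rw [Real.norm_eq_abs] at hft
    have hsum_nonneg : ∀ k ∈ (Finset.univ : Finset (Fin n)),
        0 ≤ ∑ l : Fin n, (|M t k l| + |N t k l|) :=
      fun k _ => Finset.sum_nonneg fun l _ => by positivity
    have h1 : ∑ l : Fin n, (|M t i l| + |N t i l|)
        ≤ ∑ k : Fin n, ∑ l : Fin n, (|M t k l| + |N t k l|) :=
      Finset.single_le_sum hsum_nonneg (Finset.mem_univ i)
    have h2 : |M t i j| + |N t i j| ≤ ∑ l : Fin n, (|M t i l| + |N t i l|) :=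
      Finset.single_le_sum (f := fun l => |M t i l| + |N t i l|)
        (fun l _ => by positivity) (Finset.mem_univ j)
    have h3 : ∑ k : Fin n, ∑ l : Fin n, (|M t k l| + |N t k l|) ≤ c :=
      le_trans (le_abs_self _) hft
    constructor
    · nlinarith [abs_nonneg (N t i j)]
    · nlinarith [abs_nonneg (M t i j)]
  set K : ℝ := 2 * (n : ℝ)^2 * c + 1 with hK
  -- the main epsilon-perturbed statement
  have main : ∀ ε : ℝ, 0 < ε → ∀ t ∈ Icc 0 T, ∀ v : Fin n → ℝ, v ⬝ᵥ v = 1 →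
      0 < v ⬝ᵥ ((S₂ t - S₁ t) *ᵥ v) + ε * Real.exp (K * t) := by
    intro ε hε
    by_contra hcon
    push_neg at hcon
    obtain ⟨t₁, ht₁, v₁, hv₁, hq₁⟩ := hcon
    set Q : ℝ → (Fin n → ℝ) → ℝ :=
      fun t w => w ⬝ᵥ ((S₂ t - S₁ t) *ᵥ w) + ε * Real.exp (K * t) with hQ
    have hQc : ∀ w : Fin n → ℝ, ContinuousOn (fun t => Q t w) (Icc 0 T) := by
      intro w
      simp only [hQ, dotProduct, Matrix.mulVec]
      refine ContinuousOn.add ?_ ?_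
      · refine continuousOn_finset_sum _ fun i _ => ContinuousOn.mul continuousOn_const ?_
        exact continuousOn_finset_sum _ fun j _ => (hcU i j).mul continuousOn_const
      · exact continuousOn_const.mul
          ((Real.continuous_exp.comp (continuous_const.mul continuous_id)).continuousOn)
    set F : ℝ × (Fin n → ℝ) → ℝ := fun p => Q p.1 p.2 with hF
    have hFc : ContinuousOn F (Icc 0 T ×ˢ (univ : Set (Fin n → ℝ))) := by
      simp only [hF, hQ, dotProduct, Matrix.mulVec]
      refine ContinuousOn.add ?_ ?_
      · refine continuousOn_finset_sum _ fun i _ => ContinuousOn.mul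
          ((continuous_apply i).comp continuous_snd).continuousOn ?_
        refine continuousOn_finset_sum _ fun j _ => ContinuousOn.mul ?_
          ((continuous_apply j).comp continuous_snd).continuousOn
        exact (hcU i j).comp continuous_fst.continuousOn (fun p hp => hp.1)
      · exact continuousOn_const.mul
          (Real.continuous_exp.comp (continuous_const.mul continuous_fst)).continuousOn
    set Z : Set (ℝ × (Fin n → ℝ)) := ((Icc 0 T ×ˢ (univ : Set (Fin n → ℝ))) ∩ F ⁻¹' Iic 0)
      ∩ {p | p.2 ⬝ᵥ p.2 = 1} with hZdef
    have hsphclosed : IsClosed {w : Fin n → ℝ | w ⬝ᵥ w = 1} := by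
      have : Continuous fun w : Fin n → ℝ => w ⬝ᵥ w := by
        simp only [dotProduct]
        exact continuous_finset_sum _ fun i _ => (continuous_apply i).mul (continuous_apply i)
      exact isClosed_eq this continuous_const
    have hZclosed : IsClosed Z :=
      (hFc.preimage_isClosed_of_isClosed (isClosed_Icc.prod isClosed_univ) isClosed_Iic).inter
        (hsphclosed.preimage continuous_snd)
    have hZsub : Z ⊆ Icc 0 T ×ˢ {w : Fin n → ℝ | w ⬝ᵥ w = 1} :=
      fun p hp => ⟨hp.1.1.1, hp.2⟩
    have hZcompact : IsCompact Z :=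
      ((isCompact_Icc.prod (aux_sphere_compact n)).of_isClosed_subset hZclosed hZsub)
    have hZne : Z.Nonempty := ⟨(t₁, v₁), ⟨⟨⟨ht₁, mem_univ _⟩, by simpa [hF, hQ] using hq₁⟩, hv₁⟩⟩
    set Bad : Set ℝ := Prod.fst '' Z with hBadDef
    have hBadcompact : IsCompact Bad := hZcompact.image continuous_fst
    have hBadne : Bad.Nonempty := hZne.image _
    set ts : ℝ := sInf Bad with htsdef
    have htsBad : ts ∈ Bad := hBadcompact.sInf_mem hBadne
    obtain ⟨p, hpZ, hp1⟩ := htsBad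
    obtain ⟨tt, v⟩ := p
    simp only at hp1
    have htsIcc : ts ∈ Icc 0 T := by rw [← hp1]; exact hpZ.1.1.1
    have hv : v ⬝ᵥ v = 1 := hpZ.2
    have hqle : Q ts v ≤ 0 := by rw [← hp1]; exact hpZ.1.2
    have hBadmem : ∀ s ∈ Icc 0 T, ∀ w : Fin n → ℝ, w ⬝ᵥ w = 1 → Q s w ≤ 0 → ts ≤ s := by
      intro s hs w hw hQw
      exact csInf_le hBadcompact.bddBelow ⟨(s, w), ⟨⟨⟨hs, mem_univ _⟩, hQw⟩, hw⟩, rfl⟩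
    have hpos_lt : ∀ s ∈ Icc 0 T, s < ts → ∀ w : Fin n → ℝ, w ⬝ᵥ w = 1 → 0 < Q s w := by
      intro s hs hst w hw
      by_contra h
      push_neg at h
      exact absurd (hBadmem s hs w hw h) (not_le.mpr hst)
    have htspos : 0 < ts := by
      rcases (htsIcc.1).lt_or_eq with h | h
      · exact h
      · exfalso
        have h2 := h0.dotProduct_mulVec_nonneg v
        rw [star_trivial] at h2
        rw [← h] at hqle
        simp only [hQ, mul_zero, Real.exp_zero, mul_one] at hqle
        linarith
    -- scaling helpers
    have hscale : ∀ (X : Matrix (Fin n) (Fin n) ℝ) (w : Fin n → ℝ) (r : ℝ),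
        (r • w) ⬝ᵥ (X *ᵥ (r • w)) = r ^ 2 * (w ⬝ᵥ (X *ᵥ w)) := by
      intro X w r
      rw [Matrix.mulVec_smul, dotProduct_smul, smul_dotProduct]
      simp only [smul_eq_mul]
      ring
    have hnormalize : ∀ w : Fin n → ℝ, w ≠ 0 →
        ∃ r : ℝ, 0 < r ∧ (r • w) ⬝ᵥ (r • w) = 1 := by
      intro w hw
      have hpos : 0 < w ⬝ᵥ w := aux_dot_self_pos hw
      refine ⟨(Real.sqrt (w ⬝ᵥ w))⁻¹, inv_pos.mpr (Real.sqrt_pos.mpr hpos), ?_⟩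
      rw [smul_dotProduct, dotProduct_smul, smul_eq_mul, smul_eq_mul,
        ← mul_assoc, ← mul_inv, Real.mul_self_sqrt hpos.le, inv_mul_cancel₀ hpos.ne']
    set δ : ℝ := ε * Real.exp (K * ts) with hδ
    have hδpos : 0 < δ := mul_pos hε (Real.exp_pos _)
    set P : Matrix (Fin n) (Fin n) ℝ := (S₂ ts - S₁ ts) + δ • 1 with hPdef
    have hPquad : ∀ w : Fin n → ℝ,
        w ⬝ᵥ (P *ᵥ w) = w ⬝ᵥ ((S₂ ts - S₁ ts) *ᵥ w) + δ * (w ⬝ᵥ w) := by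
      intro w
      simp only [hPdef, Matrix.add_mulVec, dotProduct_add, Matrix.smul_mulVec,
        Matrix.one_mulVec, dotProduct_smul, smul_eq_mul]
    have hQt0 : ∀ w : Fin n → ℝ, w ⬝ᵥ w = 1 → 0 ≤ Q ts w := by
      intro w hw
      have hsub : Ico (0:ℝ) ts ⊆ Icc 0 T :=
        fun s hs => ⟨hs.1, hs.2.le.trans htsIcc.2⟩
      have hcw : ContinuousWithinAt (fun t => Q t w) (Ico 0 ts) ts :=
        ((hQc w) ts htsIcc).mono hsub
      have hne : (nhdsWithin ts (Ico (0:ℝ) ts)).NeBot := by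
        rw [← mem_closure_iff_nhdsWithin_neBot, closure_Ico htspos.ne]
        exact right_mem_Icc.mpr htspos.le
      exact ge_of_tendsto hcw
        (eventually_nhdsWithin_of_forall fun s hs => (hpos_lt s (hsub hs) hs.2 w hw).le)
    have hUsymm : (S₂ ts - S₁ ts).IsSymm := by
      rw [Matrix.IsSymm, Matrix.transpose_sub, (hS₁symm ts htsIcc).eq, (hS₂symm ts htsIcc).eq]
    have hPpsd : P.PosSemidef := by
      refine Matrix.PosSemidef.of_dotProduct_mulVec_nonneg ?_ ?_
      · rw [Matrix.IsHermitian, Matrix.conjTranspose_eq_transpose_of_trivial]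
        simp only [hPdef, Matrix.transpose_add, Matrix.transpose_smul, Matrix.transpose_one,
          Matrix.transpose_sub, (hS₁symm ts htsIcc).eq, (hS₂symm ts htsIcc).eq]
      · intro w
        rw [star_trivial]
        rcases eq_or_ne w 0 with rfl | hw
        · simp
        · obtain ⟨r, hr, hru⟩ := hnormalize w hw
          have h1 : (r • w) ⬝ᵥ (P *ᵥ (r • w)) = r ^ 2 * (w ⬝ᵥ (P *ᵥ w)) := hscale P w r
          have h2 : 0 ≤ (r • w) ⬝ᵥ (P *ᵥ (r • w)) := by
            rw [hPquad (r • w), hru, mul_one]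
            have := hQt0 (r • w) hru
            simp only [hQ] at this
            linarith
          by_contra hneg
          push_neg at hneg
          have h3 : r ^ 2 * (w ⬝ᵥ (P *ᵥ w)) < 0 :=
            mul_neg_of_pos_of_neg (pow_pos hr 2) hneg
          rw [← h1] at h3
          linarith
    have hQv : Q ts v = 0 := le_antisymm hqle (hQt0 v hv)
    have hker : P *ᵥ v = 0 := by
      apply (hPpsd.dotProduct_mulVec_zero_iff v).mp
      rw [star_trivial, hPquad v, hv, mul_one]
      have := hQv
      simp only [hQ] at this
      linarith
    have hUv : (S₂ ts - S₁ ts) *ᵥ v = (-δ) • v := by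
      have h1 : (S₂ ts - S₁ ts) *ᵥ v + δ • v = 0 := by
        have := hker
        simp only [hPdef, Matrix.add_mulVec, Matrix.smul_mulVec, Matrix.one_mulVec]
          at this
        exact this
      have := eq_neg_of_add_eq_zero_left h1
      rw [this, neg_smul]
    -- derivative of the quadratic form at ts
    set D : Matrix (Fin n) (Fin n) ℝ :=
      (A₂ + B₂ * S₂ ts + S₂ ts * B₂ᵀ + S₂ ts * C₂ * S₂ ts)
      - (A₁ + B₁ * S₁ ts + S₁ ts * B₁ᵀ + S₁ ts * C₁ * S₁ ts) with hD
    set d : ℝ := (∑ i, ∑ j, v i * (D i j * v j)) + ε * (Real.exp (K * ts) * K) with hd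
    have hgd : HasDerivWithinAt (fun t => Q t v) d (Icc 0 T) ts := by
      have h1 : ∀ t, Q t v = (∑ i, ∑ j, v i * ((S₂ t i j - S₁ t i j) * v j))
          + ε * Real.exp (K * t) := by
        intro t
        simp [hQ, dotProduct, Matrix.mulVec, Matrix.sub_apply, Finset.mul_sum]
      rw [show (fun t => Q t v) = fun t =>
        (∑ i, ∑ j, v i * ((S₂ t i j - S₁ t i j) * v j)) + ε * Real.exp (K * t)
        from funext h1]
      refine HasDerivWithinAt.add ?_ ?_
      · refine HasDerivWithinAt.fun_sum fun i _ => ?_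
        refine HasDerivWithinAt.fun_sum fun j _ => ?_
        have h2 := (((hS₂ ts htsIcc i j).sub (hS₁ ts htsIcc i j)).mul_const (v j)).const_mul (v i)
        simpa [hD, Matrix.sub_apply] using h2
      · have he : HasDerivAt (fun t : ℝ => Real.exp (K * t)) (Real.exp (K * ts) * K) ts := by
          simpa using HasDerivAt.exp ((hasDerivAt_id ts).const_mul K)
        exact he.hasDerivWithinAt.const_mul ε
    -- the derivative is nonpositive because Q · v has a minimum from the left
    have hdle : d ≤ 0 := by
      have hsub2 : Icc (0:ℝ) ts ⊆ Icc 0 T := Icc_subset_Icc le_rfl htsIcc.2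
      have h2 := hgd.mono hsub2
      rw [hasDerivWithinAt_iff_tendsto_slope] at h2
      rw [show Icc (0:ℝ) ts \ {ts} = Ico 0 ts from Icc_sdiff_right] at h2
      have hne : (nhdsWithin ts (Ico (0:ℝ) ts)).NeBot := by
        rw [← mem_closure_iff_nhdsWithin_neBot, closure_Ico htspos.ne]
        exact right_mem_Icc.mpr htspos.le
      refine le_of_tendsto h2 ?_
      refine eventually_nhdsWithin_of_forall fun s hs => ?_
      have hQs : 0 < Q s v :=
        hpos_lt s ⟨hs.1, hs.2.le.trans htsIcc.2⟩ hs.2 v hv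
      rw [slope_def_field, hQv]
      apply div_nonpos_of_nonneg_of_nonpos
      · linarith
      · linarith [hs.2]
    -- but the derivative is positive, contradiction
    have hdpos : 0 < d := by
      have hsum : (∑ i, ∑ j, v i * (D i j * v j)) = v ⬝ᵥ (D *ᵥ v) := by
        simp [dotProduct, Matrix.mulVec, Finset.mul_sum]
      have hDkey : D = M ts * (S₂ ts - S₁ ts) + (S₂ ts - S₁ ts) * N ts + R ts := by
        rw [hD]; exact hkey ts
      have e1 : v ⬝ᵥ (D *ᵥ v) = (-δ) * (v ⬝ᵥ (M ts *ᵥ v)) + (-δ) * (v ⬝ᵥ (N ts *ᵥ v))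
          + v ⬝ᵥ (R ts *ᵥ v) := by
        rw [hDkey, Matrix.add_mulVec, Matrix.add_mulVec, dotProduct_add,
          dotProduct_add, ← Matrix.mulVec_mulVec, ← Matrix.mulVec_mulVec, hUv,
          Matrix.mulVec_smul, dotProduct_smul,
          aux_symmdot _ hUsymm v (N ts *ᵥ v), hUv, smul_dotProduct]
        simp only [smul_eq_mul]
      have hMb := aux_quad_bound hv (fun i j => (hc ts htsIcc i j).1)
      have hNb := aux_quad_bound hv (fun i j => (hc ts htsIcc i j).2)
      have hRb := hRpos ts htsIcc v
      have hM1 : δ * (v ⬝ᵥ (M ts *ᵥ v)) ≤ δ * ((n:ℝ)^2 * c) :=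
        mul_le_mul_of_nonneg_left (abs_le.mp hMb).2 hδpos.le
      have hN1 : δ * (v ⬝ᵥ (N ts *ᵥ v)) ≤ δ * ((n:ℝ)^2 * c) :=
        mul_le_mul_of_nonneg_left (abs_le.mp hNb).2 hδpos.le
      have hdval : d = v ⬝ᵥ (D *ᵥ v) + δ * K := by
        rw [hd, hsum, hδ]; ring
      rw [hdval, e1, hK]
      nlinarith [hδpos]
    exact absurd hdle (not_le.mpr hdpos)
  -- conclusion: let ε → 0
  intro t ht
  refine Matrix.PosSemidef.of_dotProduct_mulVec_nonneg ?_ ?_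
  · rw [Matrix.IsHermitian, Matrix.conjTranspose_eq_transpose_of_trivial,
      Matrix.transpose_sub, (hS₁symm t ht).eq, (hS₂symm t ht).eq]
  · have hmain2 : ∀ u : Fin n → ℝ, u ⬝ᵥ u = 1 → 0 ≤ u ⬝ᵥ ((S₂ t - S₁ t) *ᵥ u) := by
      intro u hu
      by_contra hneg
      push_neg at hneg
      set q : ℝ := u ⬝ᵥ ((S₂ t - S₁ t) *ᵥ u) with hqdef
      have hE : 0 < Real.exp (K * t) := Real.exp_pos _
      have hε' : 0 < -q / (2 * Real.exp (K * t)) := div_pos (by linarith) (by positivity)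
      have h2 := main _ hε' t ht u hu
      rw [← hqdef] at h2
      have h3 : -q / (2 * Real.exp (K * t)) * Real.exp (K * t) = -q / 2 := by
        field_simp
      rw [h3] at h2
      linarith
    intro x
    rw [star_trivial]
    rcases eq_or_ne x 0 with rfl | hx
    · simp
    · have hpos : 0 < x ⬝ᵥ x := aux_dot_self_pos hx
      obtain ⟨r, hr, hru⟩ : ∃ r : ℝ, 0 < r ∧ (r • x) ⬝ᵥ (r • x) = 1 := by
        refine ⟨(Real.sqrt (x ⬝ᵥ x))⁻¹, inv_pos.mpr (Real.sqrt_pos.mpr hpos), ?_⟩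
        rw [smul_dotProduct, dotProduct_smul, smul_eq_mul, smul_eq_mul,
          ← mul_assoc, ← mul_inv, Real.mul_self_sqrt hpos.le, inv_mul_cancel₀ hpos.ne']
      have hxq : 0 ≤ (r • x) ⬝ᵥ ((S₂ t - S₁ t) *ᵥ (r • x)) := hmain2 _ hru
      have hs2 : (r • x) ⬝ᵥ ((S₂ t - S₁ t) *ᵥ (r • x))
          = r ^ 2 * (x ⬝ᵥ ((S₂ t - S₁ t) *ᵥ x)) := by
        rw [Matrix.mulVec_smul, dotProduct_smul, smul_dotProduct]
        simp only [smul_eq_mul]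
        ring
      by_contra hneg
      push_neg at hneg
      have h4 : r ^ 2 * (x ⬝ᵥ ((S₂ t - S₁ t) *ᵥ x)) < 0 :=
        mul_neg_of_pos_of_neg (pow_pos hr 2) hneg
      rw [← hs2] at h4
      linarith
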